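/- Let N ≥ 4 be an even integer, τ ∈ ℍ, and set a_i := θ_i^{(N)}(0, τ) and θ_i(z) := θ_i^{(N)}(z, τ), with indices read modulo N. Then for every integer j and every z ∈ ℂ, the following four identities hold: (i) a_j²·θ_0(z)² + a_{N/2+j}²·θ_{N/2}(z)² = a_0²·θ_j(z)·θ_{N−j}(z) + a_{N/2}²·θ_{N/2+j}(z)·θ_{N/2−j}(z); (ii) a_0·a_{2j}·θ_0(z)² + a_{N/2}·a_{N/2+2j}·θ_{N/2}(z)² = a_j²·θ_j(z)·θ_{N−j}(z) + a_{N/2+j}²·θ_{N/2+j}(z)·θ_{N/2−j}(z); (iii) a_j·a_{j+1}·θ_0(z)·θ_1(z) + a_{N/2+j}·a_{N/2+j+1}·θ_{N/2}(z)·θ_{N/2+1}(z) = a_0·a_1·θ_{j+1}(z)·θ_{N−j}(z) + a_{N/2}·a_{N/2+1}·θ_{N/2+j+1}(z)·θ_{N/2−j}(z); (iv) a_0·a_{2j+1}·θ_0(z)·θ_1(z) + a_{N/2}·a_{N/2+2j+1}·θ_{N/2}(z)·θ_{N/2+1}(z) = a_j·a_{j+1}·θ_{j+1}(z)·θ_{N−j}(z)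 + a_{N/2+j}·a_{N/2+j+1}·θ_{N/2+j+1}(z)·θ_{N/2−j}(z). -/

import Mathlib

open scoped UpperHalfPlane

/-- `e(x) = exp(2πix)`. -/
noncomputable def e (x : ℂ) : ℂ := Complex.exp (2 * Real.pi * Complex.I * x)

/-- The theta function with characteristic `(p, q)`:
`θ_{(p,q)}(z,τ) = ∑_{n ∈ ℤ} e((1/2)(n+p)²τ + (n+p)(z+q))`. -/
noncomputable def jtheta (p q : ℝ) (z τ : ℂ) : ℂ :=
  ∑' n : ℤ, e ((1 / 2 : ℂ) * ((n : ℂ) + p) ^ 2 * τ + ((n : ℂ) + p) * (z + q))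

/-- `θ_k^{(N)}(z,τ) = θ_{(1/2 - k/N, N/2)}(Nz, Nτ)`. -/
noncomputable def thetaN (N : ℕ) (k : ℝ) (z τ : ℂ) : ℂ :=
  jtheta (1 / 2 - k / N) (N / 2) (N * z) (N * τ)

/-- `θ_i^{(N)}(z,τ)` with integer index `i` (read modulo `N`). -/
noncomputable def thN (N : ℕ) (τ : ℍ) (i : ℤ) (z : ℂ) : ℂ := thetaN N (i : ℝ) z τ

/-- The theta null values `a_i = θ_i^{(N)}(0,τ)` with integer index `i` (read modulo `N`). -/
noncomputable def aN (N : ℕ) (τ : ℍ) (i : ℤ) : ℂ := thetaN N (i : ℝ) 0 τ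

lemma e_add (x y : ℂ) : e (x + y) = e x * e y := by
  rw [e, e, e, ← Complex.exp_add]; ring_nf

lemma e_int (k : ℤ) : e (k : ℂ) = 1 := by
  rw [e, show 2 * (Real.pi : ℂ) * Complex.I * (k : ℂ) = k * (2 * Real.pi * Complex.I) by ring]
  exact Complex.exp_int_mul_two_pi_mul_I k

noncomputable def jt (p q : ℝ) (z τ : ℂ) (n : ℤ) : ℂ :=
  e ((1 / 2 : ℂ) * ((n : ℂ) + p) ^ 2 * τ + ((n : ℂ) + p) * (z + q))

lemma jtheta_eq (p q : ℝ) (z τ : ℂ) : jtheta p q z τ = ∑' n : ℤ, jt p q z τ n := rfl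

lemma jt_eq (p q : ℝ) (z τ : ℂ) (n : ℤ) :
    jt p q z τ n = e ((1 / 2 : ℂ) * (p : ℂ) ^ 2 * τ + (p : ℂ) * (z + q)) *
      jacobiTheta₂_term n ((p : ℂ) * τ + z + q) τ := by
  rw [jt, e, jacobiTheta₂_term, e, ← Complex.exp_add]
  congr 1
  ring

lemma summable_jt (p q : ℝ) (z τ : ℂ) (hτ : 0 < τ.im) : Summable (jt p q z τ) := by
  have : Summable (jacobiTheta₂_term · ((p : ℂ) * τ + z + q) τ) :=
    (summable_jacobiTheta₂_term_iff _ _).mpr hτ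
  exact (funext (jt_eq p q z τ) : jt p q z τ = _) ▸ this.mul_left _

lemma summable_norm_jt (p q : ℝ) (z τ : ℂ) (hτ : 0 < τ.im) :
    Summable (fun n => ‖jt p q z τ n‖) :=
  summable_norm_iff.mpr (summable_jt p q z τ hτ)

lemma jtheta_char_add_one (p q : ℝ) (z τ : ℂ) : jtheta (p + 1) q z τ = jtheta p q z τ := by
  rw [jtheta_eq, jtheta_eq, ← (Equiv.addRight (1 : ℤ)).tsum_eq (jt p q z τ)]
  refine tsum_congr fun n => ?_
  simp only [jt, Equiv.coe_addRight]
  congr 2 <;> push_cast <;> ring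

lemma jtheta_z_add_int (p q : ℝ) (z τ : ℂ) (s : ℤ) :
    jtheta p q (z + s) τ = e ((p : ℂ) * s) * jtheta p q z τ := by
  rw [jtheta_eq, jtheta_eq, ← tsum_mul_left]
  refine tsum_congr fun n => ?_
  rw [jt, jt, show (1 / 2 : ℂ) * ((n : ℂ) + p) ^ 2 * τ + ((n : ℂ) + p) * (z + s + q)
      = ((n * s : ℤ) : ℂ) + ((p : ℂ) * s
        + ((1 / 2 : ℂ) * ((n : ℂ) + p) ^ 2 * τ + ((n : ℂ) + p) * (z + q))) by push_cast; ring,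
    e_add, e_add, e_int, one_mul]

lemma jtheta_neg (p q : ℝ) (z τ : ℂ) : jtheta p q z τ = jtheta (-p) q (-z - 2 * q) τ := by
  rw [jtheta_eq, jtheta_eq, ← (Equiv.neg ℤ).tsum_eq (jt (-p) q (-z - 2 * q) τ)]
  refine tsum_congr fun n => ?_
  simp only [jt, Equiv.neg_apply]
  congr 1
  push_cast
  ring

def sEven : Set (ℤ × ℤ) := {mn | (mn.1 + mn.2) % 2 = 0}

def E1 : ℤ × ℤ ≃ sEven where
  toFun ab := ⟨(ab.1 + ab.2, ab.1 - ab.2), by simp [sEven]; omega⟩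
  invFun mn := ((mn.1.1 + mn.1.2) / 2, (mn.1.1 - mn.1.2) / 2)
  left_inv ab := by obtain ⟨a, b⟩ := ab; simp only [Prod.mk.injEq]; constructor <;> omega
  right_inv mn := by
    obtain ⟨⟨m, n⟩, h⟩ := mn
    have h' : (m + n) % 2 = 0 := h
    ext <;> simp <;> omega

def E2 : ℤ × ℤ ≃ ↥(sEvenᶜ) where
  toFun ab := ⟨(ab.1 + ab.2, ab.1 - ab.2 - 1), by simp [sEven]; omega⟩
  invFun mn := ((mn.1.1 + mn.1.2 + 1) / 2, (mn.1.1 - mn.1.2 - 1) / 2)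
  left_inv ab := by obtain ⟨a, b⟩ := ab; simp only [Prod.mk.injEq]; constructor <;> omega
  right_inv mn := by
    obtain ⟨⟨m, n⟩, h⟩ := mn
    have h' : ¬ (m + n) % 2 = 0 := h
    ext <;> simp <;> omega

theorem jtheta_mul (p₁ p₂ q : ℝ) (z₁ z₂ τ : ℂ) (hτ : 0 < τ.im) :
    jtheta p₁ q z₁ τ * jtheta p₂ q z₂ τ =
      jtheta ((p₁ + p₂) / 2) (2 * q) (z₁ + z₂) (2 * τ) *
        jtheta ((p₁ - p₂) / 2) 0 (z₁ - z₂) (2 * τ)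
      + jtheta ((p₁ + p₂) / 2 - 1 / 2) (2 * q) (z₁ + z₂) (2 * τ) *
        jtheta ((p₁ - p₂) / 2 + 1 / 2) 0 (z₁ - z₂) (2 * τ) := by
  have h2τ : 0 < (2 * τ).im := by
    have : (2 * τ).im = 2 * τ.im := by simp
    rw [this]; linarith
  have hF : Summable (fun mn : ℤ × ℤ => jt p₁ q z₁ τ mn.1 * jt p₂ q z₂ τ mn.2) :=
    summable_mul_of_summable_norm (summable_norm_jt p₁ q z₁ τ hτ) (summable_norm_jt p₂ q z₂ τ hτ)
  have step1 : jtheta p₁ q z₁ τ * jtheta p₂ q z₂ τ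
      = ∑' mn : ℤ × ℤ, jt p₁ q z₁ τ mn.1 * jt p₂ q z₂ τ mn.2 := by
    rw [jtheta_eq, jtheta_eq]
    exact tsum_mul_tsum_of_summable_norm (summable_norm_jt p₁ q z₁ τ hτ)
      (summable_norm_jt p₂ q z₂ τ hτ)
  rw [step1, ← Summable.tsum_subtype_add_tsum_subtype_compl hF sEven]
  congr 1
  · rw [← E1.tsum_eq (fun x : sEven => jt p₁ q z₁ τ (x : ℤ × ℤ).1 * jt p₂ q z₂ τ (x : ℤ × ℤ).2)]
    rw [jtheta_eq, jtheta_eq,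
      tsum_mul_tsum_of_summable_norm (summable_norm_jt _ _ _ _ h2τ) (summable_norm_jt _ _ _ _ h2τ)]
    refine tsum_congr fun ab => ?_
    obtain ⟨a, b⟩ := ab
    show jt p₁ q z₁ τ (a + b) * jt p₂ q z₂ τ (a - b) = _
    simp only [jt, ← e_add]
    congr 1
    push_cast
    ring
  · rw [← E2.tsum_eq (fun x : ↥(sEvenᶜ) => jt p₁ q z₁ τ (x : ℤ × ℤ).1 * jt p₂ q z₂ τ (x : ℤ × ℤ).2)]
    rw [jtheta_eq, jtheta_eq,
      tsum_mul_tsum_of_summable_norm (summable_norm_jt _ _ _ _ h2τ) (summable_norm_jt _ _ _ _ h2τ)]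
    refine tsum_congr fun ab => ?_
    obtain ⟨a, b⟩ := ab
    show jt p₁ q z₁ τ (a + b) * jt p₂ q z₂ τ (a - b - 1) = _
    simp only [jt, ← e_add]
    congr 1
    push_cast
    ring

/-! ### Level-2N theta values -/

noncomputable def TT (N : ℕ) (τ : ℍ) (m : ℤ) (w : ℂ) : ℂ :=
  jtheta (1 / 2 - (m : ℝ) / (2 * (N : ℝ))) (N : ℝ) ((N : ℂ) * w) (2 * ((N : ℂ) * (τ : ℂ)))

noncomputable def PP (N : ℕ) (τ : ℍ) (m : ℤ) : ℂ :=
  jtheta (1 / 2 - (m : ℝ) / (2 * (N : ℝ))) 0 0 (2 * ((N : ℂ) * (τ : ℂ)))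

lemma M0' (N : ℕ) (hN : 0 < N) (τ : ℍ) (i k : ℤ) (x : ℂ) :
    thN N τ i x * thN N τ k x =
      TT N τ (i + k) (2 * x) * PP N τ ((N : ℤ) + i - k)
      + TT N τ (i + k + (N : ℤ)) (2 * x) * PP N τ (i - k) := by
  have hNr : (N : ℝ) ≠ 0 := Nat.cast_ne_zero.mpr hN.ne'
  have hτ' : 0 < ((N : ℂ) * (τ : ℂ)).im := by
    have h1 : ((N : ℂ) * (τ : ℂ)).im = (N : ℝ) * (τ : ℂ).im := by
      simp [Complex.mul_im]
    rw [h1]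
    exact mul_pos (by exact_mod_cast hN) τ.im_pos
  have key := jtheta_mul (1 / 2 - ((i : ℤ) : ℝ) / (N : ℝ)) (1 / 2 - ((k : ℤ) : ℝ) / (N : ℝ))
    ((N : ℝ) / 2) ((N : ℂ) * x) ((N : ℂ) * x) ((N : ℂ) * (τ : ℂ)) hτ'
  rw [show thN N τ i x * thN N τ k x
      = jtheta (1 / 2 - ((i : ℤ) : ℝ) / (N : ℝ)) ((N : ℝ) / 2) ((N : ℂ) * x) ((N : ℂ) * (τ : ℂ)) *
        jtheta (1 / 2 - ((k : ℤ) : ℝ) / (N : ℝ)) ((N : ℝ) / 2) ((N : ℂ) * x) ((N : ℂ) * (τ : ℂ))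
      from rfl, key]
  rw [show ((1 / 2 - ((i : ℤ) : ℝ) / (N : ℝ) + (1 / 2 - ((k : ℤ) : ℝ) / (N : ℝ))) / 2 : ℝ)
      = 1 / 2 - ((i + k : ℤ) : ℝ) / (2 * (N : ℝ)) by push_cast; field_simp; ring]
  rw [show ((1 / 2 - ((i : ℤ) : ℝ) / (N : ℝ) - (1 / 2 - ((k : ℤ) : ℝ) / (N : ℝ))) / 2 : ℝ)
      = 1 / 2 - (((N : ℤ) + i - k : ℤ) : ℝ) / (2 * (N : ℝ)) by push_cast; field_simp; ring]
  rw [show (1 / 2 - ((i + k : ℤ) : ℝ) / (2 * (N : ℝ)) - 1 / 2 : ℝ)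
      = 1 / 2 - ((i + k + (N : ℤ) : ℤ) : ℝ) / (2 * (N : ℝ)) by push_cast; field_simp; ring]
  rw [show (1 / 2 - (((N : ℤ) + i - k : ℤ) : ℝ) / (2 * (N : ℝ)) + 1 / 2 : ℝ)
      = 1 / 2 - ((i - k : ℤ) : ℝ) / (2 * (N : ℝ)) by push_cast; field_simp; ring]
  rw [show (2 * ((N : ℝ) / 2) : ℝ) = (N : ℝ) by ring]
  rw [show ((N : ℂ) * x + (N : ℂ) * x : ℂ) = (N : ℂ) * (2 * x) by ring]
  rw [show ((N : ℂ) * x - (N : ℂ) * x : ℂ) = 0 by ring]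
  rfl

section per
variable {N : ℕ} {τ : ℍ}

lemma aN_jth (i : ℤ) : aN N τ i =
    jtheta (1 / 2 - ((i : ℤ) : ℝ) / (N : ℝ)) ((N : ℝ) / 2) ((N : ℂ) * 0) ((N : ℂ) * (τ : ℂ)) := rfl

lemma TT_per (hN : 0 < N) (m : ℤ) (w : ℂ) : TT N τ (m + 2 * (N : ℤ)) w = TT N τ m w := by
  have hNr : (N : ℝ) ≠ 0 := Nat.cast_ne_zero.mpr hN.ne'
  simp only [TT]
  rw [show (1 / 2 - ((m : ℤ) : ℝ) / (2 * (N : ℝ)) : ℝ)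
      = (1 / 2 - (((m + 2 * (N : ℤ)) : ℤ) : ℝ) / (2 * (N : ℝ))) + 1 by push_cast; field_simp; ring]
  exact (jtheta_char_add_one _ _ _ _).symm

lemma PP_per (hN : 0 < N) (m : ℤ) : PP N τ (m + 2 * (N : ℤ)) = PP N τ m := by
  have hNr : (N : ℝ) ≠ 0 := Nat.cast_ne_zero.mpr hN.ne'
  simp only [PP]
  rw [show (1 / 2 - ((m : ℤ) : ℝ) / (2 * (N : ℝ)) : ℝ)
      = (1 / 2 - (((m + 2 * (N : ℤ)) : ℤ) : ℝ) / (2 * (N : ℝ))) + 1 by push_cast; field_simp; ring]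
  exact (jtheta_char_add_one _ _ _ _).symm

lemma PP_flip (hN : 0 < N) (m : ℤ) : PP N τ m = PP N τ (2 * (N : ℤ) - m) := by
  have hNr : (N : ℝ) ≠ 0 := Nat.cast_ne_zero.mpr hN.ne'
  simp only [PP]
  rw [jtheta_neg]
  rw [show (-(1 / 2 - ((m : ℤ) : ℝ) / (2 * (N : ℝ))) : ℝ)
      = 1 / 2 - (((2 * (N : ℤ) - m) : ℤ) : ℝ) / (2 * (N : ℝ)) by push_cast; field_simp; ring]
  norm_num

lemma TT_flip0 (hN : 0 < N) (m : ℤ) : TT N τ m 0 = TT N τ (2 * (N : ℤ) - m) 0 := by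
  have hNr : (N : ℝ) ≠ 0 := Nat.cast_ne_zero.mpr hN.ne'
  have hNc : (N : ℂ) ≠ 0 := Nat.cast_ne_zero.mpr hN.ne'
  simp only [TT]
  rw [show ((N : ℂ) * 0 : ℂ) = 0 from mul_zero _]
  rw [jtheta_neg]
  rw [show (-(0 : ℂ) - 2 * (((N : ℝ) : ℝ) : ℂ)) = 0 + (((-2 * (N : ℤ)) : ℤ) : ℂ) by
    push_cast; ring]
  rw [jtheta_z_add_int]
  rw [show (((-(1 / 2 - ((m : ℤ) : ℝ) / (2 * (N : ℝ)))) : ℝ) : ℂ) * (((-2 * (N : ℤ)) : ℤ) : ℂ)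
      = (((N : ℤ) - m : ℤ) : ℂ) by push_cast; field_simp]
  rw [e_int, one_mul]
  rw [show (-(1 / 2 - ((m : ℤ) : ℝ) / (2 * (N : ℝ))) : ℝ)
      = 1 / 2 - (((2 * (N : ℤ) - m) : ℤ) : ℝ) / (2 * (N : ℝ)) by push_cast; field_simp; ring]

lemma aN_per (hN : 0 < N) (i : ℤ) : aN N τ (i + (N : ℤ)) = aN N τ i := by
  have hNr : (N : ℝ) ≠ 0 := Nat.cast_ne_zero.mpr hN.ne'
  rw [aN_jth, aN_jth]
  rw [show (1 / 2 - ((i : ℤ) : ℝ) / (N : ℝ) : ℝ)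
      = (1 / 2 - (((i + (N : ℤ)) : ℤ) : ℝ) / (N : ℝ)) + 1 by push_cast; field_simp; ring]
  exact (jtheta_char_add_one _ _ _ _).symm

lemma aN_flip (hN : 0 < N) {t : ℤ} (hNt : (N : ℤ) = 2 * t) (ht : t ≠ 0) (i : ℤ) :
    aN N τ i = aN N τ ((N : ℤ) - i) := by
  have hNr : (N : ℝ) ≠ 0 := Nat.cast_ne_zero.mpr hN.ne'
  have hNc : (N : ℂ) ≠ 0 := Nat.cast_ne_zero.mpr hN.ne'
  have htc : (N : ℂ) = 2 * (t : ℂ) := by exact_mod_cast hNt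
  rw [aN_jth, aN_jth]
  rw [show ((N : ℂ) * 0 : ℂ) = 0 from mul_zero _]
  conv_lhs => rw [jtheta_neg]
  rw [show (-(0 : ℂ) - 2 * ((((N : ℝ) / 2) : ℝ) : ℂ)) = 0 + (((-(N : ℤ)) : ℤ) : ℂ) by
    push_cast; ring]
  rw [jtheta_z_add_int]
  rw [show (((-(1 / 2 - ((i : ℤ) : ℝ) / (N : ℝ))) : ℝ) : ℂ) * (((-(N : ℤ)) : ℤ) : ℂ)
      = (((t - i) : ℤ) : ℂ) by
        have htc' : (t : ℂ) ≠ 0 := Int.cast_ne_zero.mpr ht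
        push_cast; rw [htc]; field_simp]
  rw [e_int, one_mul]
  rw [show (-(1 / 2 - ((i : ℤ) : ℝ) / (N : ℝ)) : ℝ)
      = 1 / 2 - ((((N : ℤ) - i) : ℤ) : ℝ) / (N : ℝ) by push_cast; field_simp; ring]

lemma aN_neg (hN : 0 < N) {t : ℤ} (hNt : (N : ℤ) = 2 * t) (ht : t ≠ 0) (i : ℤ) :
    aN N τ (-i) = aN N τ i := by
  rw [aN_flip hN hNt ht (-i), show (N : ℤ) - -i = i + (N : ℤ) by ring, aN_per hN i]

end per

section congr
variable {N : ℕ} {τ : ℍ}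

lemma TT_mul_per (hN : 0 < N) (m : ℤ) (w : ℂ) (k : ℤ) :
    TT N τ (m + 2 * (N : ℤ) * k) w = TT N τ m w := by
  induction k using Int.induction_on with
  | zero => norm_num
  | succ n ih =>
      rw [show m + 2 * (N : ℤ) * ((n : ℤ) + 1) = (m + 2 * (N : ℤ) * (n : ℤ)) + 2 * (N : ℤ) by
        ring, TT_per hN, ih]
  | pred n ih =>
      rw [show m + 2 * (N : ℤ) * (-(n : ℤ) - 1) = (m + 2 * (N : ℤ) * (-(n : ℤ))) - 2 * (N : ℤ) by
        ring, ← ih]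
      conv_rhs => rw [show m + 2 * (N : ℤ) * (-(n : ℤ))
        = (m + 2 * (N : ℤ) * (-(n : ℤ)) - 2 * (N : ℤ)) + 2 * (N : ℤ) by ring, TT_per hN]

lemma PP_mul_per (hN : 0 < N) (m : ℤ) (k : ℤ) :
    PP N τ (m + 2 * (N : ℤ) * k) = PP N τ m := by
  induction k using Int.induction_on with
  | zero => norm_num
  | succ n ih =>
      rw [show m + 2 * (N : ℤ) * ((n : ℤ) + 1) = (m + 2 * (N : ℤ) * (n : ℤ)) + 2 * (N : ℤ) by
        ring, PP_per hN, ih]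
  | pred n ih =>
      rw [show m + 2 * (N : ℤ) * (-(n : ℤ) - 1) = (m + 2 * (N : ℤ) * (-(n : ℤ))) - 2 * (N : ℤ) by
        ring, ← ih]
      conv_rhs => rw [show m + 2 * (N : ℤ) * (-(n : ℤ))
        = (m + 2 * (N : ℤ) * (-(n : ℤ)) - 2 * (N : ℤ)) + 2 * (N : ℤ) by ring, PP_per hN]

lemma TT_congr (hN : 0 < N) {m m' : ℤ} (h : 2 * (N : ℤ) ∣ m - m') (w : ℂ) :
    TT N τ m w = TT N τ m' w := by
  obtain ⟨c, hc⟩ := h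
  rw [show m = m' + 2 * (N : ℤ) * c by linarith, TT_mul_per hN]

lemma PP_congr' (hN : 0 < N) {m m' : ℤ} (h : 2 * (N : ℤ) ∣ m - m') :
    PP N τ m = PP N τ m' := by
  obtain ⟨c, hc⟩ := h
  rw [show m = m' + 2 * (N : ℤ) * c by linarith, PP_mul_per hN]

lemma PP_congr (hN : 0 < N) {m m' : ℤ}
    (h : 2 * (N : ℤ) ∣ m - m' ∨ 2 * (N : ℤ) ∣ m + m') :
    PP N τ m = PP N τ m' := by
  rcases h with h | h
  · exact PP_congr' hN h
  · rw [PP_flip hN m]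
    refine PP_congr' hN ?_
    obtain ⟨c, hc⟩ := h
    exact ⟨1 - c, by linarith⟩

lemma TT0_congr (hN : 0 < N) {m m' : ℤ}
    (h : 2 * (N : ℤ) ∣ m - m' ∨ 2 * (N : ℤ) ∣ m + m') :
    TT N τ m 0 = TT N τ m' 0 := by
  rcases h with h | h
  · exact TT_congr hN h 0
  · rw [TT_flip0 hN m]
    refine TT_congr hN ?_ 0
    obtain ⟨c, hc⟩ := h
    exact ⟨1 - c, by linarith⟩

lemma M0W (hN : 0 < N) (i k m1 m2 m3 m4 : ℤ) (x w : ℂ) (hw : w = 2 * x)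
    (h1 : 2 * (N : ℤ) ∣ i + k - m1)
    (h2 : 2 * (N : ℤ) ∣ (N : ℤ) + i - k - m2 ∨ 2 * (N : ℤ) ∣ (N : ℤ) + i - k + m2)
    (h3 : 2 * (N : ℤ) ∣ i + k + (N : ℤ) - m3)
    (h4 : 2 * (N : ℤ) ∣ i - k - m4 ∨ 2 * (N : ℤ) ∣ i - k + m4) :
    thN N τ i x * thN N τ k x = TT N τ m1 w * PP N τ m2 + TT N τ m3 w * PP N τ m4 := by
  subst hw
  rw [M0' N hN τ i k x, TT_congr hN h1, PP_congr hN h2, TT_congr hN h3, PP_congr hN h4]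

lemma M0W0 (hN : 0 < N) (i k m1 m2 m3 m4 : ℤ)
    (h1 : 2 * (N : ℤ) ∣ i + k - m1 ∨ 2 * (N : ℤ) ∣ i + k + m1)
    (h2 : 2 * (N : ℤ) ∣ (N : ℤ) + i - k - m2 ∨ 2 * (N : ℤ) ∣ (N : ℤ) + i - k + m2)
    (h3 : 2 * (N : ℤ) ∣ i + k + (N : ℤ) - m3 ∨ 2 * (N : ℤ) ∣ i + k + (N : ℤ) + m3)
    (h4 : 2 * (N : ℤ) ∣ i - k - m4 ∨ 2 * (N : ℤ) ∣ i - k + m4) :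
    aN N τ i * aN N τ k = TT N τ m1 0 * PP N τ m2 + TT N τ m3 0 * PP N τ m4 := by
  rw [show aN N τ i * aN N τ k = thN N τ i 0 * thN N τ k 0 from rfl, M0' N hN τ i k 0,
    show (2 * (0 : ℂ)) = 0 by norm_num,
    TT0_congr hN h1, PP_congr hN h2, TT0_congr hN h3, PP_congr hN h4]

end congr

/-- Equations (7.15) and (7.16): the quadratic relations satisfied by the `θ_i^{(N)}`
for even `N`. -/
theorem quadratic_relations_even (N : ℕ) (hN : 4 ≤ N) (heven : Even N) (τ : ℍ)
    (j : ℤ) (z : ℂ) :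
    (aN N τ j ^ 2 * thN N τ 0 z ^ 2 + aN N τ ((N : ℤ) / 2 + j) ^ 2 * thN N τ ((N : ℤ) / 2) z ^ 2
      = aN N τ 0 ^ 2 * thN N τ j z * thN N τ ((N : ℤ) - j) z
        + aN N τ ((N : ℤ) / 2) ^ 2 * thN N τ ((N : ℤ) / 2 + j) z * thN N τ ((N : ℤ) / 2 - j) z) ∧
    (aN N τ 0 * aN N τ (2 * j) * thN N τ 0 z ^ 2
        + aN N τ ((N : ℤ) / 2) * aN N τ ((N : ℤ) / 2 + 2 * j) * thN N τ ((N : ℤ) / 2) z ^ 2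
      = aN N τ j ^ 2 * thN N τ j z * thN N τ ((N : ℤ) - j) z
        + aN N τ ((N : ℤ) / 2 + j) ^ 2 * thN N τ ((N : ℤ) / 2 + j) z * thN N τ ((N : ℤ) / 2 - j) z) ∧
    (aN N τ j * aN N τ (j + 1) * thN N τ 0 z * thN N τ 1 z
        + aN N τ ((N : ℤ) / 2 + j) * aN N τ ((N : ℤ) / 2 + j + 1) *
            thN N τ ((N : ℤ) / 2) z * thN N τ ((N : ℤ) / 2 + 1) z
      = aN N τ 0 * aN N τ 1 * thN N τ (j + 1) z * thN N τ ((N : ℤ) - j) z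
        + aN N τ ((N : ℤ) / 2) * aN N τ ((N : ℤ) / 2 + 1) *
            thN N τ ((N : ℤ) / 2 + j + 1) z * thN N τ ((N : ℤ) / 2 - j) z) ∧
    (aN N τ 0 * aN N τ (2 * j + 1) * thN N τ 0 z * thN N τ 1 z
        + aN N τ ((N : ℤ) / 2) * aN N τ ((N : ℤ) / 2 + 2 * j + 1) *
            thN N τ ((N : ℤ) / 2) z * thN N τ ((N : ℤ) / 2 + 1) z
      = aN N τ j * aN N τ (j + 1) * thN N τ (j + 1) z * thN N τ ((N : ℤ) - j) z
        + aN N τ ((N : ℤ) / 2 + j) * aN N τ ((N : ℤ) / 2 + j + 1) *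
            thN N τ ((N : ℤ) / 2 + j + 1) z * thN N τ ((N : ℤ) / 2 - j) z) := by
  have hN0 : 0 < N := by omega
  obtain ⟨r, hr⟩ := heven
  obtain ⟨t, ht, hNt⟩ : ∃ t : ℤ, t ≠ 0 ∧ (N : ℤ) = 2 * t := ⟨(r : ℤ), by omega, by omega⟩
  have h2 : (N : ℤ) / 2 = t := by omega
  rw [h2, hNt]
  -- θ-pair decompositions
  have hC0 : thN N τ 0 z * thN N τ 0 z
      = TT N τ 0 (2 * z) * PP N τ (2 * t) + TT N τ (2 * t) (2 * z) * PP N τ 0 :=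
    M0W hN0 0 0 0 (2 * t) (2 * t) 0 z (2 * z) rfl ⟨0, by omega⟩ (Or.inl ⟨0, by omega⟩)
      ⟨0, by omega⟩ (Or.inl ⟨0, by omega⟩)
  have hCN : thN N τ t z * thN N τ t z
      = TT N τ (2 * t) (2 * z) * PP N τ (2 * t) + TT N τ 0 (2 * z) * PP N τ 0 :=
    M0W hN0 t t (2 * t) (2 * t) 0 0 z (2 * z) rfl ⟨0, by omega⟩ (Or.inl ⟨0, by omega⟩)
      ⟨1, by omega⟩ (Or.inl ⟨0, by omega⟩)
  have hCj : thN N τ j z * thN N τ (2 * t - j) z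
      = TT N τ (2 * t) (2 * z) * PP N τ (2 * j) + TT N τ 0 (2 * z) * PP N τ (2 * j + 2 * t) :=
    M0W hN0 j (2 * t - j) (2 * t) (2 * j) 0 (2 * j + 2 * t) z (2 * z) rfl ⟨0, by omega⟩
      (Or.inl ⟨0, by omega⟩) ⟨1, by omega⟩ (Or.inl ⟨-1, by omega⟩)
  have hCMj : thN N τ (t + j) z * thN N τ (t - j) z
      = TT N τ (2 * t) (2 * z) * PP N τ (2 * j + 2 * t) + TT N τ 0 (2 * z) * PP N τ (2 * j) :=
    M0W hN0 (t + j) (t - j) (2 * t) (2 * j + 2 * t) 0 (2 * j) z (2 * z) rfl ⟨0, by omega⟩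
      (Or.inl ⟨0, by omega⟩) ⟨1, by omega⟩ (Or.inl ⟨0, by omega⟩)
  have hC01 : thN N τ 0 z * thN N τ 1 z
      = TT N τ 1 (2 * z) * PP N τ (2 * t + 1) + TT N τ (2 * t + 1) (2 * z) * PP N τ 1 :=
    M0W hN0 0 1 1 (2 * t + 1) (2 * t + 1) 1 z (2 * z) rfl ⟨0, by omega⟩
      (Or.inr ⟨1, by omega⟩) ⟨0, by omega⟩ (Or.inr ⟨0, by omega⟩)
  have hCM1 : thN N τ t z * thN N τ (t + 1) z
      = TT N τ (2 * t + 1) (2 * z) * PP N τ (2 * t + 1) + TT N τ 1 (2 * z) * PP N τ 1 :=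
    M0W hN0 t (t + 1) (2 * t + 1) (2 * t + 1) 1 1 z (2 * z) rfl ⟨0, by omega⟩
      (Or.inr ⟨1, by omega⟩) ⟨1, by omega⟩ (Or.inr ⟨0, by omega⟩)
  have hCj1 : thN N τ (j + 1) z * thN N τ (2 * t - j) z
      = TT N τ (2 * t + 1) (2 * z) * PP N τ (2 * j + 1)
        + TT N τ 1 (2 * z) * PP N τ (2 * j + 2 * t + 1) :=
    M0W hN0 (j + 1) (2 * t - j) (2 * t + 1) (2 * j + 1) 1 (2 * j + 2 * t + 1) z (2 * z) rfl
      ⟨0, by omega⟩ (Or.inl ⟨0, by omega⟩) ⟨1, by omega⟩ (Or.inl ⟨-1, by omega⟩)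
  have hCMj1 : thN N τ (t + j + 1) z * thN N τ (t - j) z
      = TT N τ (2 * t + 1) (2 * z) * PP N τ (2 * j + 2 * t + 1)
        + TT N τ 1 (2 * z) * PP N τ (2 * j + 1) :=
    M0W hN0 (t + j + 1) (t - j) (2 * t + 1) (2 * j + 2 * t + 1) 1 (2 * j + 1) z (2 * z) rfl
      ⟨0, by omega⟩ (Or.inl ⟨0, by omega⟩) ⟨1, by omega⟩ (Or.inl ⟨0, by omega⟩)
  -- a-pair decompositions
  have hA00 : aN N τ 0 * aN N τ 0
      = TT N τ 0 0 * PP N τ (2 * t) + TT N τ (2 * t) 0 * PP N τ 0 :=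
    M0W0 hN0 0 0 0 (2 * t) (2 * t) 0 (Or.inl ⟨0, by omega⟩) (Or.inl ⟨0, by omega⟩)
      (Or.inl ⟨0, by omega⟩) (Or.inl ⟨0, by omega⟩)
  have hANN : aN N τ t * aN N τ t
      = TT N τ (2 * t) 0 * PP N τ (2 * t) + TT N τ 0 0 * PP N τ 0 :=
    M0W0 hN0 t t (2 * t) (2 * t) 0 0 (Or.inl ⟨0, by omega⟩) (Or.inl ⟨0, by omega⟩)
      (Or.inl ⟨1, by omega⟩) (Or.inl ⟨0, by omega⟩)
  have hAj' : aN N τ j * aN N τ j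
      = TT N τ (2 * j) 0 * PP N τ (2 * t) + TT N τ (2 * j + 2 * t) 0 * PP N τ 0 :=
    M0W0 hN0 j j (2 * j) (2 * t) (2 * j + 2 * t) 0 (Or.inl ⟨0, by omega⟩)
      (Or.inl ⟨0, by omega⟩) (Or.inl ⟨0, by omega⟩) (Or.inl ⟨0, by omega⟩)
  have hAj : aN N τ j * aN N τ j
      = TT N τ 0 0 * PP N τ (2 * j + 2 * t) + TT N τ (2 * t) 0 * PP N τ (2 * j) := by
    rw [show aN N τ j * aN N τ j = aN N τ j * aN N τ (-j) by rw [aN_neg hN0 hNt ht]]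
    exact M0W0 hN0 j (-j) 0 (2 * j + 2 * t) (2 * t) (2 * j) (Or.inl ⟨0, by omega⟩)
      (Or.inl ⟨0, by omega⟩) (Or.inl ⟨0, by omega⟩) (Or.inl ⟨0, by omega⟩)
  have hAMj' : aN N τ (t + j) * aN N τ (t + j)
      = TT N τ (2 * j + 2 * t) 0 * PP N τ (2 * t) + TT N τ (2 * j) 0 * PP N τ 0 :=
    M0W0 hN0 (t + j) (t + j) (2 * j + 2 * t) (2 * t) (2 * j) 0 (Or.inl ⟨0, by omega⟩)
      (Or.inl ⟨0, by omega⟩) (Or.inl ⟨1, by omega⟩) (Or.inl ⟨0, by omega⟩)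
  have hAMj : aN N τ (t + j) * aN N τ (t + j)
      = TT N τ 0 0 * PP N τ (2 * j) + TT N τ (2 * t) 0 * PP N τ (2 * j + 2 * t) := by
    rw [show aN N τ (t + j) * aN N τ (t + j) = aN N τ (t + j) * aN N τ (-(t + j)) by
      rw [aN_neg hN0 hNt ht]]
    exact M0W0 hN0 (t + j) (-(t + j)) 0 (2 * j) (2 * t) (2 * j + 2 * t) (Or.inl ⟨0, by omega⟩)
      (Or.inl ⟨1, by omega⟩) (Or.inl ⟨0, by omega⟩) (Or.inl ⟨0, by omega⟩)
  have hA02j : aN N τ 0 * aN N τ (2 * j)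
      = TT N τ (2 * j) 0 * PP N τ (2 * j + 2 * t) + TT N τ (2 * j + 2 * t) 0 * PP N τ (2 * j) :=
    M0W0 hN0 0 (2 * j) (2 * j) (2 * j + 2 * t) (2 * j + 2 * t) (2 * j) (Or.inl ⟨0, by omega⟩)
      (Or.inr ⟨1, by omega⟩) (Or.inl ⟨0, by omega⟩) (Or.inr ⟨0, by omega⟩)
  have hAM2j : aN N τ t * aN N τ (t + 2 * j)
      = TT N τ (2 * j + 2 * t) 0 * PP N τ (2 * j + 2 * t) + TT N τ (2 * j) 0 * PP N τ (2 * j) :=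
    M0W0 hN0 t (t + 2 * j) (2 * j + 2 * t) (2 * j + 2 * t) (2 * j) (2 * j)
      (Or.inl ⟨0, by omega⟩) (Or.inr ⟨1, by omega⟩) (Or.inl ⟨1, by omega⟩) (Or.inr ⟨0, by omega⟩)
  have hA01 : aN N τ 0 * aN N τ 1
      = TT N τ 1 0 * PP N τ (2 * t + 1) + TT N τ (2 * t + 1) 0 * PP N τ 1 :=
    M0W0 hN0 0 1 1 (2 * t + 1) (2 * t + 1) 1 (Or.inl ⟨0, by omega⟩) (Or.inr ⟨1, by omega⟩)
      (Or.inl ⟨0, by omega⟩) (Or.inr ⟨0, by omega⟩)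
  have hAM1 : aN N τ t * aN N τ (t + 1)
      = TT N τ (2 * t + 1) 0 * PP N τ (2 * t + 1) + TT N τ 1 0 * PP N τ 1 :=
    M0W0 hN0 t (t + 1) (2 * t + 1) (2 * t + 1) 1 1 (Or.inl ⟨0, by omega⟩)
      (Or.inr ⟨1, by omega⟩) (Or.inl ⟨1, by omega⟩) (Or.inr ⟨0, by omega⟩)
  have hAjj1' : aN N τ j * aN N τ (j + 1)
      = TT N τ (2 * j + 1) 0 * PP N τ (2 * t + 1) + TT N τ (2 * j + 2 * t + 1) 0 * PP N τ 1 :=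
    M0W0 hN0 j (j + 1) (2 * j + 1) (2 * t + 1) (2 * j + 2 * t + 1) 1 (Or.inl ⟨0, by omega⟩)
      (Or.inr ⟨1, by omega⟩) (Or.inl ⟨0, by omega⟩) (Or.inr ⟨0, by omega⟩)
  have hAjj1 : aN N τ j * aN N τ (j + 1)
      = TT N τ 1 0 * PP N τ (2 * j + 2 * t + 1) + TT N τ (2 * t + 1) 0 * PP N τ (2 * j + 1) := by
    rw [show aN N τ j * aN N τ (j + 1) = aN N τ j * aN N τ (-(j + 1)) by
      rw [aN_neg hN0 hNt ht]]
    exact M0W0 hN0 j (-(j + 1)) 1 (2 * j + 2 * t + 1) (2 * t + 1) (2 * j + 1)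
      (Or.inr ⟨0, by omega⟩) (Or.inl ⟨0, by omega⟩) (Or.inr ⟨1, by omega⟩) (Or.inl ⟨0, by omega⟩)
  have hAMjj1' : aN N τ (t + j) * aN N τ (t + j + 1)
      = TT N τ (2 * j + 2 * t + 1) 0 * PP N τ (2 * t + 1) + TT N τ (2 * j + 1) 0 * PP N τ 1 :=
    M0W0 hN0 (t + j) (t + j + 1) (2 * j + 2 * t + 1) (2 * t + 1) (2 * j + 1) 1
      (Or.inl ⟨0, by omega⟩) (Or.inr ⟨1, by omega⟩) (Or.inl ⟨1, by omega⟩) (Or.inr ⟨0, by omega⟩)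
  have hAMjj1 : aN N τ (t + j) * aN N τ (t + j + 1)
      = TT N τ 1 0 * PP N τ (2 * j + 1) + TT N τ (2 * t + 1) 0 * PP N τ (2 * j + 2 * t + 1) := by
    rw [show aN N τ (t + j) * aN N τ (t + j + 1) = aN N τ (t + j) * aN N τ (-(t + j + 1)) by
      rw [aN_neg hN0 hNt ht]]
    exact M0W0 hN0 (t + j) (-(t + j + 1)) 1 (2 * j + 1) (2 * t + 1) (2 * j + 2 * t + 1)
      (Or.inr ⟨0, by omega⟩) (Or.inl ⟨1, by omega⟩) (Or.inr ⟨1, by omega⟩) (Or.inl ⟨0, by omega⟩)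
  have hA02j1 : aN N τ 0 * aN N τ (2 * j + 1)
      = TT N τ (2 * j + 1) 0 * PP N τ (2 * j + 2 * t + 1)
        + TT N τ (2 * j + 2 * t + 1) 0 * PP N τ (2 * j + 1) :=
    M0W0 hN0 0 (2 * j + 1) (2 * j + 1) (2 * j + 2 * t + 1) (2 * j + 2 * t + 1) (2 * j + 1)
      (Or.inl ⟨0, by omega⟩) (Or.inr ⟨1, by omega⟩) (Or.inl ⟨0, by omega⟩) (Or.inr ⟨0, by omega⟩)
  have hAM2j1 : aN N τ t * aN N τ (t + 2 * j + 1)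
      = TT N τ (2 * j + 2 * t + 1) 0 * PP N τ (2 * j + 2 * t + 1)
        + TT N τ (2 * j + 1) 0 * PP N τ (2 * j + 1) :=
    M0W0 hN0 t (t + 2 * j + 1) (2 * j + 2 * t + 1) (2 * j + 2 * t + 1) (2 * j + 1) (2 * j + 1)
      (Or.inl ⟨0, by omega⟩) (Or.inr ⟨1, by omega⟩) (Or.inl ⟨1, by omega⟩) (Or.inr ⟨0, by omega⟩)
  refine ⟨?_, ?_, ?_, ?_⟩
  · linear_combination
      (thN N τ 0 z * thN N τ 0 z) * hAj
      + (TT N τ 0 0 * PP N τ (2 * j + 2 * t) + TT N τ (2 * t) 0 * PP N τ (2 * j)) * hC0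
      + (thN N τ t z * thN N τ t z) * hAMj
      + (TT N τ 0 0 * PP N τ (2 * j) + TT N τ (2 * t) 0 * PP N τ (2 * j + 2 * t)) * hCN
      - (thN N τ j z * thN N τ (2 * t - j) z) * hA00
      - (TT N τ 0 0 * PP N τ (2 * t) + TT N τ (2 * t) 0 * PP N τ 0) * hCj
      - (thN N τ (t + j) z * thN N τ (t - j) z) * hANN
      - (TT N τ (2 * t) 0 * PP N τ (2 * t) + TT N τ 0 0 * PP N τ 0) * hCMj
  · linear_combination
      (thN N τ 0 z * thN N τ 0 z) * hA02j
      + (TT N τ (2 * j) 0 * PP N τ (2 * j + 2 * t) + TT N τ (2 * j + 2 * t) 0 * PP N τ (2 * j)) * hC0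
      + (thN N τ t z * thN N τ t z) * hAM2j
      + (TT N τ (2 * j + 2 * t) 0 * PP N τ (2 * j + 2 * t) + TT N τ (2 * j) 0 * PP N τ (2 * j)) * hCN
      - (thN N τ j z * thN N τ (2 * t - j) z) * hAj'
      - (TT N τ (2 * j) 0 * PP N τ (2 * t) + TT N τ (2 * j + 2 * t) 0 * PP N τ 0) * hCj
      - (thN N τ (t + j) z * thN N τ (t - j) z) * hAMj'
      - (TT N τ (2 * j + 2 * t) 0 * PP N τ (2 * t) + TT N τ (2 * j) 0 * PP N τ 0) * hCMj
  · linear_combination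
      (thN N τ 0 z * thN N τ 1 z) * hAjj1
      + (TT N τ 1 0 * PP N τ (2 * j + 2 * t + 1) + TT N τ (2 * t + 1) 0 * PP N τ (2 * j + 1)) * hC01
      + (thN N τ t z * thN N τ (t + 1) z) * hAMjj1
      + (TT N τ 1 0 * PP N τ (2 * j + 1) + TT N τ (2 * t + 1) 0 * PP N τ (2 * j + 2 * t + 1)) * hCM1
      - (thN N τ (j + 1) z * thN N τ (2 * t - j) z) * hA01
      - (TT N τ 1 0 * PP N τ (2 * t + 1) + TT N τ (2 * t + 1) 0 * PP N τ 1) * hCj1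
      - (thN N τ (t + j + 1) z * thN N τ (t - j) z) * hAM1
      - (TT N τ (2 * t + 1) 0 * PP N τ (2 * t + 1) + TT N τ 1 0 * PP N τ 1) * hCMj1
  · linear_combination
      (thN N τ 0 z * thN N τ 1 z) * hA02j1
      + (TT N τ (2 * j + 1) 0 * PP N τ (2 * j + 2 * t + 1)
          + TT N τ (2 * j + 2 * t + 1) 0 * PP N τ (2 * j + 1)) * hC01
      + (thN N τ t z * thN N τ (t + 1) z) * hAM2j1
      + (TT N τ (2 * j + 2 * t + 1) 0 * PP N τ (2 * j + 2 * t + 1)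
          + TT N τ (2 * j + 1) 0 * PP N τ (2 * j + 1)) * hCM1
      - (thN N τ (j + 1) z * thN N τ (2 * t - j) z) * hAjj1'
      - (TT N τ (2 * j + 1) 0 * PP N τ (2 * t + 1) + TT N τ (2 * j + 2 * t + 1) 0 * PP N τ 1) * hCj1
      - (thN N τ (t + j + 1) z * thN N τ (t - j) z) * hAMjj1'
      - (TT N τ (2 * j + 2 * t + 1) 0 * PP N τ (2 * t + 1) + TT N τ (2 * j + 1) 0 * PP N τ 1) * hCMj1
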